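/- arXiv:0909.0083 — 2 statements merged into one kernel-verified Lean document; each statement's English description precedes it below -/
import Mathlib

section
/- Suppose an M×N real matrix Φ satisfies the RIP of order K+1 with isometry constant δ < 1/(3√K), and let x ∈ ℝ^N be nonzero with ‖x‖₀ ≤ K. Then the first identification step of Orthogonal Matching Pursuit succeeds: for h⁰ = Φᵀ Φ x, there exists j ∈ supp(x) with |h⁰(j)| strictly larger than |h⁰(j')| for every j' ∉ supp(x); in particular every index maximizing |h⁰(j)| lies in supp(x). -/
noncomputable section

namespace OMP

open Matrix Finset

/-- The support of a vector, as a `Finset`. -/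
def supp {n : ℕ} (x : Fin n → ℝ) : Finset (Fin n) :=
  Finset.univ.filter fun j => x j ≠ 0

/-- The Euclidean (ℓ²) norm of a vector. -/
def l2 {n : ℕ} (x : Fin n → ℝ) : ℝ := Real.sqrt (∑ j, x j ^ 2)

/-- The ℓ^∞ norm of a vector. -/
def linf {n : ℕ} (x : Fin n → ℝ) : ℝ := ⨆ j, |x j|

/-- The standard inner product of two vectors. -/
def dotp {n : ℕ} (x y : Fin n → ℝ) : ℝ := ∑ j, x j * y j

/-- The restriction of a vector to a set of indices (zero elsewhere). -/
def restr {n : ℕ} (Γ : Finset (Fin n)) (x : Fin n → ℝ) : Fin n → ℝ :=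
  fun j => if j ∈ Γ then x j else 0

/-- The restricted isometry property of order `K` with isometry constant `δ`. -/
def RIP {M N : ℕ} (K : ℕ) (Φ : Matrix (Fin M) (Fin N) ℝ) (δ : ℝ) : Prop :=
  0 < δ ∧ δ < 1 ∧ ∀ x : Fin N → ℝ, (supp x).card ≤ K →
    (1 - δ) * l2 x ^ 2 ≤ l2 (Φ.mulVec x) ^ 2 ∧
      l2 (Φ.mulVec x) ^ 2 ≤ (1 + δ) * l2 x ^ 2

/-- The span of the columns of `Φ` indexed by `Λ`, as a submodule of Euclidean space. -/
def colSpan {M N : ℕ} (Φ : Matrix (Fin M) (Fin N) ℝ) (Λ : Finset (Fin N)) :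
    Submodule ℝ (EuclideanSpace ℝ (Fin M)) :=
  Submodule.span ℝ ((fun j => (WithLp.equiv 2 (Fin M → ℝ)).symm fun i => Φ i j) '' (Λ : Set (Fin N)))

/-- Orthogonal projection `P_Λ` onto the span of the columns of `Φ` indexed by `Λ`. -/
def projCol {M N : ℕ} (Φ : Matrix (Fin M) (Fin N) ℝ) (Λ : Finset (Fin N))
    (v : Fin M → ℝ) : Fin M → ℝ :=
  WithLp.equiv 2 (Fin M → ℝ)
    (Submodule.orthogonalProjectionOnto (colSpan Φ Λ) ((WithLp.equiv 2 (Fin M → ℝ)).symm v) : EuclideanSpace ℝ (Fin M))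

/-- The matrix `A_Λ = (I - P_Λ) Φ`: the columns of `Φ` orthogonalized against `colSpan Φ Λ`. -/
def Amat {M N : ℕ} (Φ : Matrix (Fin M) (Fin N) ℝ) (Λ : Finset (Fin N)) :
    Matrix (Fin M) (Fin N) ℝ :=
  Matrix.of fun i j => Φ i j - projCol Φ Λ (fun i' => Φ i' j) i

lemma l2_sq {n : ℕ} (x : Fin n → ℝ) : l2 x ^ 2 = ∑ j, x j ^ 2 :=
  Real.sq_sqrt (Finset.sum_nonneg fun j _ => sq_nonneg _)

lemma l2_pos {n : ℕ} {x : Fin n → ℝ} (hx : x ≠ 0) : 0 < l2 x := by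
  have ⟨j, hj⟩ : ∃ j, x j ≠ 0 := by
    by_contra h; push_neg at h; exact hx (funext h)
  apply Real.sqrt_pos.2
  have : (0:ℝ) < x j ^ 2 := by positivity
  exact lt_of_lt_of_le this (Finset.single_le_sum (f := fun j => x j ^ 2)
    (fun i _ => sq_nonneg _) (Finset.mem_univ j))

lemma dotp_transpose {M N : ℕ} (Φ : Matrix (Fin M) (Fin N) ℝ) (w : Fin M → ℝ)
    (y : Fin N → ℝ) : dotp (Φᵀ.mulVec w) y = dotp w (Φ.mulVec y) := by
  simp only [dotp, Matrix.mulVec, dotProduct, Matrix.transpose_apply,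
    Finset.sum_mul, Finset.mul_sum]
  rw [Finset.sum_comm]
  congr 1; ext i; congr 1; ext j; ring

lemma polar {M : ℕ} (a b : Fin M → ℝ) :
    (∑ i, (a i + b i) ^ 2) - (∑ i, (a i - b i) ^ 2) = 4 * dotp a b := by
  rw [dotp, Finset.mul_sum, ← Finset.sum_sub_distrib]
  congr 1; ext i; ring

/-- Bound for off-support entries of `ΦᵀΦx`. -/
lemma outside_bound {M N K : ℕ} (Φ : Matrix (Fin M) (Fin N) ℝ) (δ : ℝ) (x : Fin N → ℝ)
    (hRIP : RIP (K + 1) Φ δ) (hx : x ≠ 0) (hsp : (supp x).card ≤ K)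
    {j : Fin N} (hj : j ∉ supp x) :
    |(Φᵀ.mulVec (Φ.mulVec x)) j| ≤ δ * l2 x := by
  obtain ⟨hδ0, hδ1, hR⟩ := hRIP
  set c := l2 x with hc
  have hcpos : 0 < c := l2_pos hx
  have hxj : x j = 0 := by
    by_contra h; exact hj (Finset.mem_filter.2 ⟨Finset.mem_univ _, h⟩)
  set u : Fin N → ℝ := fun k => if k = j then c else 0 with hu
  have hcard : ∀ v : Fin N → ℝ, (∀ k, v k ≠ 0 → k = j ∨ x k ≠ 0) →
      (supp v).card ≤ K + 1 := by
    intro v hv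
    have hss : supp v ⊆ insert j (supp x) := by
      intro k hk
      rcases hv k (Finset.mem_filter.1 hk).2 with h | h
      · exact h ▸ Finset.mem_insert_self _ _
      · exact Finset.mem_insert_of_mem (Finset.mem_filter.2 ⟨Finset.mem_univ _, h⟩)
    calc (supp v).card ≤ (insert j (supp x)).card := Finset.card_le_card hss
      _ ≤ (supp x).card + 1 := Finset.card_insert_le _ _
      _ ≤ K + 1 := by omega
  have hcardp : (supp (u + x)).card ≤ K + 1 := by
    apply hcard; intro k hk
    by_cases h : k = j
    · exact Or.inl h
    · right; intro h'; apply hk; simp [hu, h, h']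
  have hcardm : (supp (u - x)).card ≤ K + 1 := by
    apply hcard; intro k hk
    by_cases h : k = j
    · exact Or.inl h
    · right; intro h'; apply hk; simp [hu, h, h']
  -- l2 norms of u ± x
  have hux : (∑ k, u k * x k) = 0 := by
    rw [Finset.sum_eq_single j]
    · simp [hxj]
    · intro k _ h; simp [hu, h]
    · intro h; exact absurd (Finset.mem_univ j) h
  have hsum_ite : (∑ k, (if k = j then c ^ 2 else 0)) = c ^ 2 := by simp
  have huk2 : ∀ s : ℝ, (∑ k, (u k + s * x k) ^ 2) = (1 + s ^ 2) * c ^ 2 := by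
    intro s
    calc (∑ k, (u k + s * x k) ^ 2)
        = ∑ k, ((if k = j then c ^ 2 else 0) + (2 * s) * (u k * x k)
            + s ^ 2 * x k ^ 2) := by
          refine Finset.sum_congr rfl fun k _ => ?_
          by_cases h : k = j
          · subst h; simp [hu, hxj]
          · simp [hu, h]; ring
      _ = c ^ 2 + (2 * s) * (∑ k, u k * x k) + s ^ 2 * (∑ k, x k ^ 2) := by
          rw [Finset.sum_add_distrib, Finset.sum_add_distrib, hsum_ite,
            ← Finset.mul_sum, ← Finset.mul_sum]
      _ = (1 + s ^ 2) * c ^ 2 := by rw [hux, ← l2_sq, ← hc]; ring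
  have hl2p : l2 (u + x) ^ 2 = 2 * c ^ 2 := by
    rw [l2_sq]
    calc (∑ k, ((u + x) k) ^ 2) = ∑ k, (u k + 1 * x k) ^ 2 := by
          refine Finset.sum_congr rfl fun k _ => ?_; rw [Pi.add_apply]; ring
      _ = (1 + 1 ^ 2) * c ^ 2 := huk2 1
      _ = 2 * c ^ 2 := by ring
  have hl2m : l2 (u - x) ^ 2 = 2 * c ^ 2 := by
    rw [l2_sq]
    calc (∑ k, ((u - x) k) ^ 2) = ∑ k, (u k + (-1) * x k) ^ 2 := by
          refine Finset.sum_congr rfl fun k _ => ?_; rw [Pi.sub_apply]; ring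
      _ = (1 + (-1 : ℝ) ^ 2) * c ^ 2 := huk2 (-1)
      _ = 2 * c ^ 2 := by ring
  have hRp := hR (u + x) hcardp
  have hRm := hR (u - x) hcardm
  rw [hl2p] at hRp; rw [hl2m] at hRm
  have hpol : l2 (Φ.mulVec (u + x)) ^ 2 - l2 (Φ.mulVec (u - x)) ^ 2 =
      4 * dotp (Φ.mulVec u) (Φ.mulVec x) := by
    rw [l2_sq, l2_sq, Matrix.mulVec_add, Matrix.mulVec_sub]
    exact polar _ _
  have hdot : dotp (Φ.mulVec u) (Φ.mulVec x) = c * (Φᵀ.mulVec (Φ.mulVec x)) j := by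
    have hΦu : ∀ i, Φ.mulVec u i = Φ i j * c := by
      intro i
      simp only [Matrix.mulVec, dotProduct, hu, mul_ite, mul_zero]
      simp
    have h1 : dotp (Φ.mulVec u) (Φ.mulVec x) =
        ∑ i, (Φ i j * c) * (Φ.mulVec x) i := by
      rw [dotp]; exact Finset.sum_congr rfl fun i _ => by rw [hΦu]
    have h2 : (Φᵀ.mulVec (Φ.mulVec x)) j = ∑ i, Φ i j * (Φ.mulVec x) i := rfl
    rw [h1, h2, Finset.mul_sum]
    refine Finset.sum_congr rfl fun i _ => ?_; ring
  have key : |c * (Φᵀ.mulVec (Φ.mulVec x)) j| ≤ δ * c ^ 2 := by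
    rw [abs_le]
    constructor <;> nlinarith [hRp.1, hRp.2, hRm.1, hRm.2, hpol, hdot]
  rw [abs_mul, abs_of_pos hcpos] at key
  have : c * |(Φᵀ.mulVec (Φ.mulVec x)) j| ≤ c * (δ * c) := key.trans (le_of_eq (by ring))
  exact le_of_mul_le_mul_left this hcpos

/-- the first identification step of OMP succeeds. -/
theorem stmt5 {M N K : ℕ} (Φ : Matrix (Fin M) (Fin N) ℝ) (δ : ℝ) (x : Fin N → ℝ)
    (hRIP : RIP (K + 1) Φ δ) (hδ : δ < 1 / (3 * Real.sqrt K))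
    (hx : x ≠ 0) (hsp : (supp x).card ≤ K)
    (h0 : Fin N → ℝ) (hh : h0 = Φᵀ.mulVec (Φ.mulVec x)) :
    ∃ j ∈ supp x, ∀ j' ∉ supp x, |h0 j'| < |h0 j| := by
  obtain ⟨hδ0, hδ1, hR⟩ := hRIP
  set c := l2 x with hc
  have hcpos : 0 < c := l2_pos hx
  have hS : (supp x).Nonempty := by
    obtain ⟨j, hj⟩ : ∃ j, x j ≠ 0 := by
      by_contra h; push_neg at h; exact hx (funext h)
    exact ⟨j, Finset.mem_filter.2 ⟨Finset.mem_univ _, hj⟩⟩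
  have hK1 : 1 ≤ K := le_trans (Finset.card_pos.2 hS) hsp
  have hKpos : (0:ℝ) < K := by exact_mod_cast Nat.lt_of_lt_of_le Nat.zero_lt_one hK1
  set sK := Real.sqrt K with hsK
  have hsK1 : 1 ≤ sK := Real.one_le_sqrt.2 (by exact_mod_cast hK1)
  have hsKpos : 0 < sK := lt_of_lt_of_le one_pos hsK1
  have hδsK : δ * sK < 1 / 3 := by
    have h3 : (0:ℝ) < 3 * sK := by positivity
    have h := (lt_div_iff₀ h3).1 hδ
    nlinarith
  have hδ3 : δ < 1 / 3 := lt_of_le_of_lt (le_mul_of_one_le_right hδ0.le hsK1) hδsK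
  have hkey : δ * sK < 1 - δ := by nlinarith
  have hRx := hR x (le_trans hsp (Nat.le_succ K))
  have hdhx : dotp h0 x = l2 (Φ.mulVec x) ^ 2 := by
    rw [hh, dotp_transpose, l2_sq, dotp]
    refine Finset.sum_congr rfl fun i _ => ?_; ring
  have hlow : (1 - δ) * c ^ 2 ≤ dotp h0 x := by rw [hdhx]; exact hRx.1
  obtain ⟨j₀, hj₀, hmax⟩ := (supp x).exists_max_image (fun j => |h0 j|) hS
  refine ⟨j₀, hj₀, ?_⟩
  have hcs : dotp h0 x ≤ |h0 j₀| * (sK * c) := by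
    have h1 : dotp h0 x ≤ ∑ j ∈ supp x, |h0 j| * |x j| := by
      rw [dotp, ← Finset.sum_subset (Finset.subset_univ (supp x))
        (fun j _ hj => by
          have : x j = 0 := by
            by_contra h; exact hj (Finset.mem_filter.2 ⟨Finset.mem_univ _, h⟩)
          simp [this])]
      exact Finset.sum_le_sum fun j _ => (le_abs_self _).trans (abs_mul _ _).le
    have h2 : (∑ j ∈ supp x, |h0 j| * |x j|) ≤ |h0 j₀| * ∑ j ∈ supp x, |x j| := by
      rw [Finset.mul_sum]
      exact Finset.sum_le_sum fun j hj =>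
        mul_le_mul_of_nonneg_right (hmax j hj) (abs_nonneg _)
    have h0le : (0:ℝ) ≤ ∑ j ∈ supp x, |x j| :=
      Finset.sum_nonneg fun _ _ => abs_nonneg _
    have hsq : (∑ j ∈ supp x, |x j|) ^ 2 ≤ (K : ℝ) * c ^ 2 := by
      calc (∑ j ∈ supp x, |x j|) ^ 2
          ≤ (supp x).card * ∑ j ∈ supp x, |x j| ^ 2 := sq_sum_le_card_mul_sum_sq
        _ ≤ (K : ℝ) * c ^ 2 := by
            apply mul_le_mul
            · exact_mod_cast hsp
            · calc (∑ j ∈ supp x, |x j| ^ 2)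
                  = ∑ j ∈ supp x, x j ^ 2 := Finset.sum_congr rfl fun j _ => sq_abs _
                _ ≤ ∑ j, x j ^ 2 := Finset.sum_le_sum_of_subset_of_nonneg
                    (Finset.subset_univ _) fun j _ _ => sq_nonneg _
                _ = c ^ 2 := by rw [hc, l2_sq]
            · exact Finset.sum_nonneg fun _ _ => sq_nonneg _
            · positivity
    have h3 : (∑ j ∈ supp x, |x j|) ≤ sK * c := by
      have := (Real.le_sqrt h0le (by positivity)).2 hsq
      calc (∑ j ∈ supp x, |x j|) ≤ Real.sqrt ((K : ℝ) * c ^ 2) := this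
        _ = sK * c := by rw [Real.sqrt_mul hKpos.le, Real.sqrt_sq hcpos.le]
    calc dotp h0 x ≤ |h0 j₀| * ∑ j ∈ supp x, |x j| := h1.trans h2
      _ ≤ |h0 j₀| * (sK * c) := mul_le_mul_of_nonneg_left h3 (abs_nonneg _)
  have hmain : (1 - δ) * c ≤ |h0 j₀| * sK := by
    have h := hlow.trans hcs
    nlinarith
  intro j' hj'
  have hout : |h0 j'| ≤ δ * c := by
    rw [hh]; exact outside_bound Φ δ x ⟨hδ0, hδ1, hR⟩ hx hsp hj'
  have hlt : δ * c * sK < |h0 j₀| * sK := by nlinarith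
  have : δ * c < |h0 j₀| := by
    by_contra h; push_neg at h
    exact absurd hlt (not_lt.2 (mul_le_mul_of_nonneg_right h hsKpos.le))
  exact lt_of_le_of_lt hout this


end OMP
end
end

section
/- Suppose an M×N real matrix Φ satisfies the RIP of order K+1 with isometry constant δ < 1/(3√K). Let x ∈ ℝ^N with ‖x‖₀ ≤ K, and let Λ ⊊ supp(x) be a proper subset of the support of x. Define x̃ ∈ ℝ^N by x̃(j) = 0 for j ∈ Λ and x̃(j) = x(j) for j ∉ Λ, and set h = A_Λᵀ A_Λ x̃. Then there exists j ∈ supp(x) \ Λ with |h(j)| strictly larger than |h(j')| for every j' ∉ supp(x) \ Λ; in particular every index maximizing |h(j)| lies in supp(x) \ Λ. -/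
noncomputable section

namespace OMP

open Matrix Finset

lemma l2_nonneg {n : ℕ} (x : Fin n → ℝ) : 0 ≤ l2 x := Real.sqrt_nonneg _

lemma dotp_self {n : ℕ} (x : Fin n → ℝ) : dotp x x = l2 x ^ 2 := by
  rw [l2_sq]; unfold dotp; exact Finset.sum_congr rfl fun j _ => (sq (x j)).symm

lemma dotp_self_nonneg {n : ℕ} (x : Fin n → ℝ) : 0 ≤ dotp x x := by
  rw [dotp_self]; positivity

lemma dotp_comm {n : ℕ} (x y : Fin n → ℝ) : dotp x y = dotp y x := by
  unfold dotp; exact Finset.sum_congr rfl fun j _ => mul_comm _ _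

lemma dotp_add_add {n : ℕ} (a b : Fin n → ℝ) :
    dotp (a + b) (a + b) = dotp a a + 2 * dotp a b + dotp b b := by
  have h : ∀ j, (a j + b j) * (a j + b j)
      = a j * a j + 2 * (a j * b j) + b j * b j := fun j => by ring
  simp [dotp, Pi.add_apply, h, Finset.sum_add_distrib, Finset.mul_sum]

lemma dotp_sub_sub {n : ℕ} (a b : Fin n → ℝ) :
    dotp (a - b) (a - b) = dotp a a - 2 * dotp a b + dotp b b := by
  have h : ∀ j, (a j - b j) * (a j - b j)
      = a j * a j - 2 * (a j * b j) + b j * b j := fun j => by ring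
  simp [dotp, Pi.sub_apply, h, Finset.sum_add_distrib, Finset.sum_sub_distrib, Finset.mul_sum]

lemma dotp_smul_left {n : ℕ} (c : ℝ) (a b : Fin n → ℝ) :
    dotp (c • a) b = c * dotp a b := by
  simp [dotp, Finset.mul_sum, mul_assoc]

lemma dotp_sub_left {n : ℕ} (a b c : Fin n → ℝ) :
    dotp (a - b) c = dotp a c - dotp b c := by
  simp [dotp, sub_mul, Finset.sum_sub_distrib]

lemma l2_eq_zero {n : ℕ} {x : Fin n → ℝ} (h : l2 x = 0) : x = 0 := by
  have h2 : ∑ j, x j ^ 2 = 0 := by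
    have := congrArg (fun t => t ^ 2) h
    simpa [l2_sq] using this
  funext j
  have := (Finset.sum_eq_zero_iff_of_nonneg (fun j _ => sq_nonneg (x j))).1 h2 j (Finset.mem_univ j)
  exact pow_eq_zero_iff (n := 2) (by norm_num) |>.1 this

lemma supp_add_subset {n : ℕ} (a b : Fin n → ℝ) :
    supp (a + b) ⊆ supp a ∪ supp b := by
  intro j hj
  simp only [supp, Finset.mem_filter, Finset.mem_union, Finset.mem_univ, true_and] at *
  by_contra hc
  push_neg at hc
  simp [hc.1, hc.2] at hj

lemma supp_sub_subset {n : ℕ} (a b : Fin n → ℝ) :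
    supp (a - b) ⊆ supp a ∪ supp b := by
  intro j hj
  simp only [supp, Finset.mem_filter, Finset.mem_union, Finset.mem_univ, true_and] at *
  by_contra hc
  push_neg at hc
  simp [hc.1, hc.2] at hj

lemma supp_smul_subset {n : ℕ} (c : ℝ) (a : Fin n → ℝ) :
    supp (c • a) ⊆ supp a := by
  intro j hj
  simp only [supp, Finset.mem_filter, Finset.mem_univ, true_and, Pi.smul_apply,
    smul_eq_mul] at *
  intro h; simp [h] at hj

/-- Polarization: a quadratic-form bound implies a bilinear bound. -/
lemma quad_to_bilin {n m : ℕ} (T : (Fin n → ℝ) → (Fin m → ℝ))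
    (hadd : ∀ a b, T (a + b) = T a + T b) (hsmul : ∀ (c : ℝ) a, T (c • a) = c • T a)
    (ε : ℝ) (u v : Fin n → ℝ)
    (H : ∀ w, supp w ⊆ supp u ∪ supp v → |dotp (T w) (T w) - dotp w w| ≤ ε * dotp w w) :
    |dotp (T u) (T v) - dotp u v| ≤ ε * (l2 u * l2 v) := by
  have hT0 : T 0 = 0 := by
    have := hsmul 0 0; simpa using this
  have hsub : ∀ a b, T (a - b) = T a - T b := by
    intro a b
    have h1 : T (a + (-1 : ℝ) • b) = T a + (-1 : ℝ) • T b := by rw [hadd, hsmul]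
    simpa [sub_eq_add_neg, neg_one_smul] using h1
  -- half bound
  have half : ∀ p q : Fin n → ℝ, supp p ⊆ supp u ∪ supp v → supp q ⊆ supp u ∪ supp v →
      |dotp (T p) (T q) - dotp p q| ≤ ε * (dotp p p + dotp q q) / 2 := by
    intro p q hp hq
    have h1 := H (p + q) (Finset.Subset.trans (supp_add_subset p q) (by
      intro j hj; rcases Finset.mem_union.1 hj with h | h; exact hp h; exact hq h))
    have h2 := H (p - q) (Finset.Subset.trans (supp_sub_subset p q) (by
      intro j hj; rcases Finset.mem_union.1 hj with h | h; exact hp h; exact hq h))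
    rw [hadd] at h1; rw [hsub] at h2
    rw [dotp_add_add, dotp_add_add] at h1
    rw [dotp_sub_sub, dotp_sub_sub] at h2
    have key : 4 * (dotp (T p) (T q) - dotp p q)
        = (dotp (T p) (T p) + 2 * dotp (T p) (T q) + dotp (T q) (T q)
            - (dotp p p + 2 * dotp p q + dotp q q))
          - (dotp (T p) (T p) - 2 * dotp (T p) (T q) + dotp (T q) (T q)
            - (dotp p p - 2 * dotp p q + dotp q q)) := by ring
    have habs : |4 * (dotp (T p) (T q) - dotp p q)|
        ≤ ε * (dotp p p + 2 * dotp p q + dotp q q)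
          + ε * (dotp p p - 2 * dotp p q + dotp q q) := by
      rw [key]
      exact (abs_sub _ _).trans (add_le_add h1 h2)
    have : (4 : ℝ) * |dotp (T p) (T q) - dotp p q| ≤ 2 * (ε * (dotp p p + dotp q q)) := by
      calc (4 : ℝ) * |dotp (T p) (T q) - dotp p q| = |4 * (dotp (T p) (T q) - dotp p q)| := by
            rw [abs_mul]; norm_num
        _ ≤ _ := habs.trans (le_of_eq (by ring))
    linarith
  rcases eq_or_lt_of_le (l2_nonneg u) with hu | hu
  · have hu0 : u = 0 := l2_eq_zero hu.symm
    subst hu0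
    simp [hT0, dotp, ← hu]
  rcases eq_or_lt_of_le (l2_nonneg v) with hv | hv
  · have hv0 : v = 0 := l2_eq_zero hv.symm
    subst hv0
    simp [hT0, dotp, ← hv]
  set a := l2 u with ha
  set b := l2 v with hb
  set c := b / a with hc
  have hcpos : 0 < c := div_pos hv hu
  have hp : supp (c • u) ⊆ supp u ∪ supp v :=
    (supp_smul_subset c u).trans (Finset.subset_union_left)
  have hq : supp v ⊆ supp u ∪ supp v := Finset.subset_union_right
  have hhalf := half (c • u) v hp hq
  have hpp : dotp (c • u) (c • u) = c ^ 2 * dotp u u := by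
    rw [dotp_smul_left, dotp_comm, dotp_smul_left]; ring
  have hdu : dotp u u = a ^ 2 := dotp_self u
  have hdv : dotp v v = b ^ 2 := dotp_self v
  have hcb : c ^ 2 * a ^ 2 = b ^ 2 := by
    rw [hc, div_pow, div_mul_cancel₀ _ (pow_ne_zero 2 hu.ne')]
  have hB : dotp (T (c • u)) (T v) - dotp (c • u) v
      = c * (dotp (T u) (T v) - dotp u v) := by
    rw [hsmul, dotp_smul_left, dotp_smul_left]; ring
  rw [hB, hpp, hdu, hdv, hcb, abs_mul, abs_of_pos hcpos] at hhalf
  have : c * |dotp (T u) (T v) - dotp u v| ≤ ε * b ^ 2 := by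
    calc c * |dotp (T u) (T v) - dotp u v| ≤ ε * (b ^ 2 + b ^ 2) / 2 := hhalf
      _ = ε * b ^ 2 := by ring
  have hfin : |dotp (T u) (T v) - dotp u v| ≤ (ε * b ^ 2) / c := by
    rw [le_div_iff₀ hcpos] at *
    linarith [this]
  calc |dotp (T u) (T v) - dotp u v| ≤ (ε * b ^ 2) / c := hfin
    _ = ε * (a * b) := by rw [hc]; field_simp


variable {M N : ℕ} (Φ : Matrix (Fin M) (Fin N) ℝ) (Λ : Finset (Fin N))

lemma inner_eq_dotp (u v : Fin M → ℝ) :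
    (inner ℝ ((WithLp.equiv 2 (Fin M → ℝ)).symm u) ((WithLp.equiv 2 (Fin M → ℝ)).symm v) : ℝ)
      = dotp u v := by
  simp [PiLp.inner_apply, RCLike.inner_apply, dotp, mul_comm]

lemma projCol_add (a b : Fin M → ℝ) :
    projCol Φ Λ (a + b) = projCol Φ Λ a + projCol Φ Λ b := by
  unfold projCol
  have : (WithLp.equiv 2 (Fin M → ℝ)).symm (a + b)
      = (WithLp.equiv 2 (Fin M → ℝ)).symm a + (WithLp.equiv 2 (Fin M → ℝ)).symm b := rfl
  rw [this, map_add]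
  rfl

lemma projCol_smul (c : ℝ) (a : Fin M → ℝ) :
    projCol Φ Λ (c • a) = c • projCol Φ Λ a := by
  unfold projCol
  have : (WithLp.equiv 2 (Fin M → ℝ)).symm (c • a)
      = c • (WithLp.equiv 2 (Fin M → ℝ)).symm a := rfl
  rw [this, ContinuousLinearMap.map_smul]
  rfl

/-- `projCol` as a linear map. -/
def projL : (Fin M → ℝ) →ₗ[ℝ] (Fin M → ℝ) where
  toFun := projCol Φ Λ
  map_add' := projCol_add Φ Λ
  map_smul' := projCol_smul Φ Λ

lemma mulVec_eq_sum_smul (u : Fin N → ℝ) :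
    Φ.mulVec u = ∑ j, u j • (fun i => Φ i j) := by
  funext i
  simp [Matrix.mulVec, dotProduct, Finset.sum_apply, mul_comm]

lemma Amat_mulVec (u : Fin N → ℝ) :
    (Amat Φ Λ).mulVec u = Φ.mulVec u - projCol Φ Λ (Φ.mulVec u) := by
  have hproj : projCol Φ Λ (Φ.mulVec u) = ∑ j, u j • projCol Φ Λ (fun i => Φ i j) := by
    rw [mulVec_eq_sum_smul]
    exact map_sum (projL Φ Λ) (fun j => u j • (fun i => Φ i j)) Finset.univ |>.trans
      (Finset.sum_congr rfl fun j _ => map_smul (projL Φ Λ) (u j) _)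
  funext i
  simp only [Pi.sub_apply, hproj, Finset.sum_apply, Pi.smul_apply, smul_eq_mul]
  simp only [Amat, Matrix.mulVec, dotProduct, Matrix.of_apply, sub_mul]
  rw [Finset.sum_sub_distrib]
  congr 1
  exact Finset.sum_congr rfl fun j _ => mul_comm _ _

lemma dotp_sub_proj (v z : Fin M → ℝ)
    (hz : (WithLp.equiv 2 (Fin M → ℝ)).symm z ∈ colSpan Φ Λ) :
    dotp (v - projCol Φ Λ v) z = 0 := by
  have hmem := Submodule.sub_starProjection_mem_orthogonal (K := colSpan Φ Λ)
    ((WithLp.equiv 2 (Fin M → ℝ)).symm v)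
  have h0 := (Submodule.mem_orthogonal' _ _).1 hmem _ hz
  rw [← inner_eq_dotp]
  convert h0 using 2
  rfl

lemma projCol_mem (v : Fin M → ℝ) :
    (WithLp.equiv 2 (Fin M → ℝ)).symm (projCol Φ Λ v) ∈ colSpan Φ Λ := by
  unfold projCol
  exact (Submodule.orthogonalProjectionOnto (colSpan Φ Λ) ((WithLp.equiv 2 (Fin M → ℝ)).symm v)).2

/-- Every element of `colSpan` is `Φ z` for some `z` supported in `Λ`. -/
lemma colSpan_rep (p : EuclideanSpace ℝ (Fin M)) (hp : p ∈ colSpan Φ Λ) :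
    ∃ z : Fin N → ℝ, (∀ j, j ∉ Λ → z j = 0) ∧
      (WithLp.equiv 2 (Fin M → ℝ)).symm (Φ.mulVec z) = p := by
  classical
  let L : (Fin N → ℝ) →ₗ[ℝ] EuclideanSpace ℝ (Fin M) :=
    { toFun := fun z => (WithLp.equiv 2 (Fin M → ℝ)).symm (Φ.mulVec (restr Λ z))
      map_add' := by
        intro a b
        have : restr Λ (a + b) = restr Λ a + restr Λ b := by
          funext j; simp only [restr, Pi.add_apply]; split <;> simp
        rw [this, Matrix.mulVec_add]; rfl
      map_smul' := by
        intro c a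
        have : restr Λ (c • a) = c • restr Λ a := by
          funext j; simp only [restr, Pi.smul_apply, smul_eq_mul]; split <;> simp
        rw [this, Matrix.mulVec_smul]; rfl }
  have hle : colSpan Φ Λ ≤ LinearMap.range L := by
    rw [colSpan, Submodule.span_le]
    rintro _ ⟨j, hj, rfl⟩
    refine ⟨Pi.single j 1, ?_⟩
    have hres : restr Λ (Pi.single j 1) = Pi.single j 1 := by
      funext j'
      simp only [restr]
      by_cases h : j' ∈ Λ
      · simp [h]
      · have : j' ≠ j := fun he => h (he ▸ hj)
        simp [h, Pi.single_apply, this]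
    simp only [L, LinearMap.coe_mk, AddHom.coe_mk, hres, Matrix.mulVec_single]
    congr 1
    funext i
    simp
  obtain ⟨z0, hz0⟩ := hle hp
  exact ⟨restr Λ z0, fun j hj => by simp [restr, hj], hz0⟩

lemma Amat_col_zero {j : Fin N} (hj : j ∈ Λ) (i : Fin M) : Amat Φ Λ i j = 0 := by
  have hmem : (WithLp.equiv 2 (Fin M → ℝ)).symm (fun i' => Φ i' j) ∈ colSpan Φ Λ :=
    Submodule.subset_span ⟨j, hj, rfl⟩
  have : projCol Φ Λ (fun i' => Φ i' j) = fun i' => Φ i' j := by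
    unfold projCol
    rw [show ((colSpan Φ Λ).orthogonalProjectionOnto ((WithLp.equiv 2 (Fin M → ℝ)).symm (fun i' => Φ i' j)) : EuclideanSpace ℝ (Fin M)) = _ from Submodule.starProjection_eq_self_iff.2 hmem]
    rfl
  simp [Amat, this]


/-- RIP in quadratic-error form. -/
lemma RIP_quad {M N K : ℕ} {Φ : Matrix (Fin M) (Fin N) ℝ} {δ : ℝ}
    (hRIP : RIP (K + 1) Φ δ) (w : Fin N → ℝ) (hcard : (supp w).card ≤ K + 1) :
    |dotp (Φ.mulVec w) (Φ.mulVec w) - dotp w w| ≤ δ * dotp w w := by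
  obtain ⟨hδ0, hδ1, hR⟩ := hRIP
  obtain ⟨h1, h2⟩ := hR w hcard
  rw [dotp_self, dotp_self, abs_le]
  constructor <;> nlinarith

/-- Approximate preservation of inner products by `Φ`. -/
lemma Phi_bilin {M N K : ℕ} {Φ : Matrix (Fin M) (Fin N) ℝ} {δ : ℝ}
    (hRIP : RIP (K + 1) Φ δ) (u v : Fin N → ℝ)
    (hcard : (supp u ∪ supp v).card ≤ K + 1) :
    |dotp (Φ.mulVec u) (Φ.mulVec v) - dotp u v| ≤ δ * (l2 u * l2 v) :=
  quad_to_bilin Φ.mulVec (fun a b => Matrix.mulVec_add Φ a b)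
    (fun c a => Matrix.mulVec_smul Φ c a) δ u v
    (fun w hw => RIP_quad hRIP w (le_trans (Finset.card_le_card hw) hcard))

/-- Modified RIP for the orthogonalized matrix `A_Λ`. -/
lemma ARIP {M N K : ℕ} {Φ : Matrix (Fin M) (Fin N) ℝ} {δ : ℝ} {Λ : Finset (Fin N)}
    (hRIP : RIP (K + 1) Φ δ) (w : Fin N → ℝ)
    (hw : ∀ j ∈ Λ, w j = 0) (hcard : (supp w).card + Λ.card ≤ K + 1) :
    |dotp ((Amat Φ Λ).mulVec w) ((Amat Φ Λ).mulVec w) - dotp w w|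
      ≤ (δ / (1 - δ)) * dotp w w := by
  obtain ⟨hδ0, hδ1, hR⟩ := hRIP
  have h1δ : 0 < 1 - δ := by linarith
  set v := Φ.mulVec w with hv
  set p := projCol Φ Λ v with hp
  have hA : (Amat Φ Λ).mulVec w = v - p := Amat_mulVec Φ Λ w
  obtain ⟨z, hz0, hzp⟩ := colSpan_rep Φ Λ _ (projCol_mem Φ Λ v)
  have hPz : Φ.mulVec z = p := (WithLp.equiv 2 (Fin M → ℝ)).symm.injective hzp
  have hsuppz : supp z ⊆ Λ := by
    intro j hj
    simp only [supp, Finset.mem_filter, Finset.mem_univ, true_and] at hj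
    by_contra hc
    exact hj (hz0 j hc)
  have horth : dotp (v - p) p = 0 := dotp_sub_proj Φ Λ v p (projCol_mem Φ Λ v)
  have hvp : dotp v p = dotp p p := by
    rw [dotp_sub_left] at horth; linarith
  have hpyth : dotp (v - p) (v - p) = dotp v v - dotp p p := by
    rw [dotp_sub_sub]; linarith
  have hdisj : dotp w z = 0 := by
    apply Finset.sum_eq_zero
    intro j _
    by_cases hjΛ : j ∈ Λ
    · rw [hw j hjΛ, zero_mul]
    · rw [hz0 j hjΛ, mul_zero]
  have hczΛ : (supp z).card ≤ Λ.card := Finset.card_le_card hsuppz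
  have hcard_u : (supp w ∪ supp z).card ≤ K + 1 :=
    le_trans (Finset.card_union_le _ _) (by omega)
  have hbilin := Phi_bilin ⟨hδ0, hδ1, hR⟩ w z hcard_u
  rw [hdisj, sub_zero, hPz] at hbilin
  have hzRIP := (hR z (by omega)).1
  rw [← dotp_self, ← dotp_self, hPz] at hzRIP
  set a := l2 w with hadef
  set b := l2 z with hbdef
  have hb0 : 0 ≤ b := l2_nonneg z
  have ha0 : 0 ≤ a := l2_nonneg w
  have hP2 : 0 ≤ dotp p p := dotp_self_nonneg p
  have hb2 : dotp z z = b ^ 2 := dotp_self z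
  have haw : dotp w w = a ^ 2 := dotp_self w
  rw [hb2] at hzRIP
  have hPle : dotp p p ≤ δ * (a * b) := by
    rw [← hvp]; exact le_trans (le_abs_self _) hbilin
  have key : (1 - δ) * dotp p p ≤ δ ^ 2 * a ^ 2 := by
    rcases eq_or_lt_of_le hP2 with h0 | h0
    · rw [← h0]; nlinarith [sq_nonneg (δ * a)]
    · have hsq : dotp p p * dotp p p ≤ (δ * (a * b)) * (δ * (a * b)) :=
        mul_le_mul hPle hPle hP2 (le_trans hP2 hPle)
      nlinarith [mul_le_mul_of_nonneg_left hzRIP (by positivity : (0:ℝ) ≤ δ ^ 2 * a ^ 2)]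
  obtain ⟨hw1, hw2⟩ := hR w (by omega)
  rw [← dotp_self, ← dotp_self] at hw1 hw2
  rw [haw] at hw1 hw2
  have hkey2 : dotp p p ≤ δ ^ 2 * a ^ 2 / (1 - δ) := by
    rw [le_div_iff₀ h1δ]; linarith [key]
  have hδδ' : δ ≤ δ / (1 - δ) := by
    have h2 := mul_le_mul_of_nonneg_left (by linarith : (1 - δ) ≤ 1) hδ0.le
    rw [mul_one] at h2
    exact (le_div_iff₀ h1δ).2 (by linarith)
  have hδδ'a2 : δ * a ^ 2 ≤ δ / (1 - δ) * a ^ 2 :=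
    mul_le_mul_of_nonneg_right hδδ' (sq_nonneg a)
  rw [hA, hpyth, haw, abs_le]
  constructor
  · have heq : -(δ / (1 - δ) * a ^ 2) = (1 - δ) * a ^ 2 - δ ^ 2 * a ^ 2 / (1 - δ) - a ^ 2 := by
      field_simp
      ring
    rw [heq]
    linarith [hw1, hkey2]
  · linarith [hw2, hP2, hδδ'a2]

lemma dotp_single_left {n : ℕ} (j : Fin n) (y : Fin n → ℝ) :
    dotp (Pi.single j 1) y = y j := by
  simp [dotp, Pi.single_apply, Finset.sum_ite_eq']

lemma l2_single {n : ℕ} (j : Fin n) : l2 (Pi.single j 1 : Fin n → ℝ) = 1 := by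
  have : ∑ j', (Pi.single j 1 : Fin n → ℝ) j' ^ 2 = 1 := by
    simp [Pi.single_apply, Finset.sum_ite_eq']
  rw [l2, this, Real.sqrt_one]

lemma supp_single_subset {n : ℕ} (j : Fin n) :
    supp (Pi.single j 1 : Fin n → ℝ) ⊆ {j} := by
  intro j' hj'
  simp only [supp, Finset.mem_filter, Finset.mem_univ, true_and] at hj'
  simp only [Finset.mem_singleton]
  by_contra hc
  exact hj' (Pi.single_eq_of_ne hc 1)

lemma transp_entry {M N : ℕ} (A : Matrix (Fin M) (Fin N) ℝ) (w : Fin M → ℝ) (j : Fin N) :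
    Aᵀ.mulVec w j = dotp (A.mulVec (Pi.single j 1)) w := by
  simp [Matrix.mulVec, dotProduct, Matrix.transpose_apply, dotp,
    Pi.single_apply, Finset.sum_ite_eq']

/-- the general induction step of OMP succeeds. -/
theorem stmt6 {M N K : ℕ} (Φ : Matrix (Fin M) (Fin N) ℝ) (δ : ℝ) (x : Fin N → ℝ)
    (Λ : Finset (Fin N))
    (hRIP : RIP (K + 1) Φ δ) (hδ : δ < 1 / (3 * Real.sqrt K))
    (hsp : (supp x).card ≤ K) (hΛ : Λ ⊂ supp x)
    (xt : Fin N → ℝ) (hxt : ∀ j, xt j = if j ∈ Λ then 0 else x j)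
    (h : Fin N → ℝ) (hh : h = (Amat Φ Λ)ᵀ.mulVec ((Amat Φ Λ).mulVec xt)) :
    ∃ j ∈ supp x \ Λ, ∀ j' ∉ supp x \ Λ, |h j'| < |h j| := by
  classical
  obtain ⟨hδ0, hδ1, hR⟩ := hRIP
  have hRIP' : RIP (K + 1) Φ δ := ⟨hδ0, hδ1, hR⟩
  set δ' : ℝ := δ / (1 - δ) with hδ'def
  obtain ⟨j0, hj0s, hj0Λ⟩ := Finset.exists_of_ssubset hΛ
  have hK1 : 1 ≤ K := le_trans (Finset.card_pos.2 ⟨j0, hj0s⟩) hsp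
  have hsK : 1 ≤ Real.sqrt K := by
    rw [show (1 : ℝ) = Real.sqrt 1 by simp]
    exact Real.sqrt_le_sqrt (by exact_mod_cast hK1)
  have hsKpos : 0 < Real.sqrt K := lt_of_lt_of_le one_pos hsK
  have hδ3 : δ * (3 * Real.sqrt K) < 1 := by
    have := (lt_div_iff₀ (by positivity : (0 : ℝ) < 3 * Real.sqrt K)).1 hδ
    linarith
  have h1δ : 0 < 1 - δ := by nlinarith
  have hδ'pos : 0 < δ' := div_pos hδ0 h1δ
  have hΛsub : Λ ⊆ supp x := hΛ.1
  have hsuppxt : supp xt = supp x \ Λ := by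
    ext j
    simp only [supp, Finset.mem_filter, Finset.mem_univ, true_and, Finset.mem_sdiff, hxt j]
    by_cases hjΛ : j ∈ Λ
    · simp [hjΛ]
    · simp [hjΛ]
  have hcards : (supp xt).card + Λ.card = (supp x).card := by
    rw [hsuppxt, Finset.card_sdiff_of_subset hΛsub]
    have := Finset.card_le_card hΛsub
    omega
  set T : ℝ := l2 xt with hTdef
  -- the key approximation bound
  have hbound : ∀ j, j ∉ Λ → |h j - xt j| ≤ δ' * T := by
    intro j hjΛ
    have hfor : h j = dotp ((Amat Φ Λ).mulVec (Pi.single j 1)) ((Amat Φ Λ).mulVec xt) := by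
      rw [hh]; exact transp_entry _ _ j
    have hdot : dotp (Pi.single j 1) xt = xt j := dotp_single_left j xt
    have hb := quad_to_bilin (Amat Φ Λ).mulVec
      (fun a b => Matrix.mulVec_add _ a b) (fun c a => Matrix.mulVec_smul _ c a)
      δ' (Pi.single j 1) xt ?_
    · rw [hfor, ← hdot]
      calc |dotp ((Amat Φ Λ).mulVec (Pi.single j 1)) ((Amat Φ Λ).mulVec xt)
            - dotp (Pi.single j 1) xt| ≤ δ' * (l2 (Pi.single j 1) * l2 xt) := hb
        _ = δ' * T := by rw [l2_single, one_mul]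
    · intro w hw
      apply ARIP hRIP'
      · intro j' hj'Λ
        by_contra hc
        have hmem : j' ∈ supp w := by
          simp only [supp, Finset.mem_filter, Finset.mem_univ, true_and]; exact hc
        have := hw hmem
        rcases Finset.mem_union.1 this with hl | hr
        · have := supp_single_subset j hl
          rw [Finset.mem_singleton] at this
          exact hjΛ (this ▸ hj'Λ)
        · rw [hsuppxt, Finset.mem_sdiff] at hr
          exact hr.2 hj'Λ
      · have h1 : supp w ⊆ supp (Pi.single j 1 : Fin N → ℝ) ∪ supp xt := hw
        have h2 : (supp w).card ≤ 1 + (supp xt).card := by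
          calc (supp w).card ≤ (supp (Pi.single j 1 : Fin N → ℝ) ∪ supp xt).card :=
                Finset.card_le_card h1
            _ ≤ (supp (Pi.single j 1 : Fin N → ℝ)).card + (supp xt).card :=
                Finset.card_union_le _ _
            _ ≤ 1 + (supp xt).card := by
                have := Finset.card_le_card (supp_single_subset j)
                simp only [Finset.card_singleton] at this
                omega
        omega
  -- h vanishes on Λ
  have hzeroΛ : ∀ j ∈ Λ, h j = 0 := by
    intro j hjΛ
    rw [hh, transp_entry]
    have : (Amat Φ Λ).mulVec (Pi.single j 1) = 0 := by
      funext i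
      rw [Matrix.mulVec_single]
      simp [Amat_col_zero Φ Λ hjΛ i]
    rw [this]
    simp [dotp]
  -- T > 0
  have hxtj0 : xt j0 ≠ 0 := by
    rw [hxt j0, if_neg hj0Λ]
    simpa [supp] using hj0s
  have hTpos : 0 < T := by
    rcases eq_or_lt_of_le (l2_nonneg xt) with h0 | h0
    · exact absurd (congrFun (l2_eq_zero h0.symm) j0) hxtj0
    · exact h0
  -- maximal coordinate
  have hne : (supp x \ Λ).Nonempty := ⟨j0, Finset.mem_sdiff.2 ⟨hj0s, hj0Λ⟩⟩
  obtain ⟨jm, hjm, hjmax⟩ := Finset.exists_max_image (supp x \ Λ) (fun j => |xt j|) hne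
  have hjmΛ : jm ∉ Λ := (Finset.mem_sdiff.1 hjm).2
  have hjmsupp : jm ∈ supp xt := hsuppxt ▸ hjm
  have hxtjm : xt jm ≠ 0 := by
    simpa [supp] using hjmsupp
  have hxtjmpos : 0 < |xt jm| := abs_pos.2 hxtjm
  -- T ≤ √K * |xt jm|
  have hTle : T ≤ Real.sqrt K * |xt jm| := by
    have h1 : T ^ 2 = ∑ j ∈ supp xt, xt j ^ 2 := by
      rw [hTdef, l2_sq]
      symm
      apply Finset.sum_subset (Finset.subset_univ _)
      intro j _ hj
      have : xt j = 0 := by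
        by_contra hc
        exact hj (by simp [supp, hc])
      simp [this]
    have h2 : ∑ j ∈ supp xt, xt j ^ 2 ≤ (supp xt).card * |xt jm| ^ 2 := by
      calc ∑ j ∈ supp xt, xt j ^ 2 ≤ ∑ j ∈ supp xt, |xt jm| ^ 2 := by
            apply Finset.sum_le_sum
            intro j hj
            have hmax := hjmax j (hsuppxt ▸ hj)
            calc xt j ^ 2 = |xt j| ^ 2 := (sq_abs _).symm
              _ ≤ |xt jm| ^ 2 := by
                  apply pow_le_pow_left₀ (abs_nonneg _) hmax
        _ = (supp xt).card * |xt jm| ^ 2 := by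
            rw [Finset.sum_const, nsmul_eq_mul]
    have h3 : ((supp xt).card : ℝ) ≤ (K : ℝ) := by
      have : (supp xt).card ≤ K := by omega
      exact_mod_cast this
    have h4 : T ^ 2 ≤ (Real.sqrt K * |xt jm|) ^ 2 := by
      rw [mul_pow, Real.sq_sqrt (Nat.cast_nonneg K)]
      calc T ^ 2 ≤ ((supp xt).card : ℝ) * |xt jm| ^ 2 := by rw [h1]; exact h2
        _ ≤ (K : ℝ) * |xt jm| ^ 2 :=
            mul_le_mul_of_nonneg_right h3 (sq_nonneg _)
    have := Real.sqrt_le_sqrt h4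
    rwa [Real.sqrt_sq hTpos.le, Real.sqrt_sq (by positivity)] at this
  -- numeric comparison
  have hjmlower : |xt jm| - δ' * T ≤ |h jm| := by
    have hb := hbound jm hjmΛ
    have := abs_sub_abs_le_abs_sub (xt jm) (h jm)
    rw [abs_sub_comm] at this
    linarith
  have hkey : 2 * (δ' * T) < |xt jm| := by
    have e1 : 2 * δ' * Real.sqrt K < 1 := by
      rw [hδ'def]
      have he : 2 * (δ / (1 - δ)) * Real.sqrt K = (2 * δ * Real.sqrt K) / (1 - δ) := by
        field_simp
      rw [he, div_lt_one h1δ]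
      have hd : δ * 1 ≤ δ * Real.sqrt K := mul_le_mul_of_nonneg_left hsK hδ0.le
      rw [mul_one] at hd
      nlinarith [hδ3]
    calc 2 * (δ' * T) ≤ 2 * δ' * (Real.sqrt K * |xt jm|) := by
          nlinarith [mul_le_mul_of_nonneg_left hTle hδ'pos.le]
      _ = (2 * δ' * Real.sqrt K) * |xt jm| := by ring
      _ < 1 * |xt jm| := mul_lt_mul_of_pos_right e1 hxtjmpos
      _ = |xt jm| := one_mul _
  refine ⟨jm, hjm, ?_⟩
  intro j' hj'
  by_cases hj'Λ : j' ∈ Λ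
  · rw [hzeroΛ j' hj'Λ, abs_zero]
    have : 0 < δ' * T := mul_pos hδ'pos hTpos
    linarith
  · have hj'x : j' ∉ supp x := by
      intro hc
      exact hj' (Finset.mem_sdiff.2 ⟨hc, hj'Λ⟩)
    have hxt0 : xt j' = 0 := by
      rw [hxt j', if_neg hj'Λ]
      by_contra hc
      exact hj'x (by simp [supp, hc])
    have hb := hbound j' hj'Λ
    rw [hxt0, sub_zero] at hb
    linarith


end OMP
end
end
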